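/- Let \Phi be a finite multiset of nonzero vectors spanning an r-dimensional rational vector space V, and let R be the ring of rational functions on the dual space generated by polynomials and the inverses 1/\phi for \phi \in \Phi. Then every function of the form \theta(L)(x) = 1/\prod_{\alpha \in L} \langle \alpha, x \rangle, where L is a finite multiset of elements of \Phi spanning V, is a linear combination of functions of the form 1/(\alpha_{i_1}^{n_1} \cdots \alpha_{i_r}^{n_r}) where \{\alpha_{i_1}, \ldots, \alpha_{i_r}\} is a linearly independent subset of \Phi of size r and n_1, \ldots, n_r are positive integers. -/

import Mathlib

open Module

section Aux

variable {V : Type*} [AddCommGroup V] [Module ℝ V]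

/-- The decomposition property: `f` agrees on regular points with a linear combination
of inverses of products of powers of linearly independent `r`-tuples from `Φ`. -/
def IsGood (r : ℕ) (Φ : Multiset V) (f : Module.Dual ℝ V → ℝ) : Prop :=
  ∃ (s : Finset ℕ) (c : ℕ → ℝ) (σ : ℕ → Fin r → V) (n : ℕ → Fin r → ℕ),
    (∀ i ∈ s, (∀ j : Fin r, σ i j ∈ Φ) ∧ LinearIndependent ℝ (σ i) ∧
      ∀ j : Fin r, 1 ≤ n i j) ∧
    ∀ x : Module.Dual ℝ V, (∀ φ ∈ Φ, x φ ≠ 0) →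
      f x = ∑ i ∈ s, c i * (∏ j : Fin r, x (σ i j) ^ n i j)⁻¹

theorem IsGood.zero (r : ℕ) (Φ : Multiset V) : IsGood r Φ (fun _ => 0) :=
  ⟨∅, fun _ => 0, fun _ _ => 0, fun _ _ => 1, by simp, by simp⟩

theorem IsGood.congr {r : ℕ} {Φ : Multiset V} {f g : Module.Dual ℝ V → ℝ}
    (hg : IsGood r Φ g) (h : ∀ x : Module.Dual ℝ V, (∀ φ ∈ Φ, x φ ≠ 0) → f x = g x) :
    IsGood r Φ f := by
  obtain ⟨s, c, σ, n, h1, h2⟩ := hg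
  exact ⟨s, c, σ, n, h1, fun x hx => (h x hx).trans (h2 x hx)⟩

theorem IsGood.smul {r : ℕ} {Φ : Multiset V} {f : Module.Dual ℝ V → ℝ}
    (hf : IsGood r Φ f) (d : ℝ) : IsGood r Φ (fun x => d * f x) := by
  obtain ⟨s, c, σ, n, h1, h2⟩ := hf
  refine ⟨s, fun i => d * c i, σ, n, h1, fun x hx => ?_⟩
  simp only [h2 x hx, Finset.mul_sum]
  exact Finset.sum_congr rfl fun i _ => by ring

theorem IsGood.add {r : ℕ} {Φ : Multiset V} {f g : Module.Dual ℝ V → ℝ}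
    (hf : IsGood r Φ f) (hg : IsGood r Φ g) : IsGood r Φ (fun x => f x + g x) := by
  obtain ⟨s₁, c₁, σ₁, n₁, h₁, e₁⟩ := hf
  obtain ⟨s₂, c₂, σ₂, n₂, h₂, e₂⟩ := hg
  set N : ℕ := s₁.sup id + 1 with hN
  have hs₁ : ∀ i ∈ s₁, i < N := fun i hi =>
    Nat.lt_succ_of_le (Finset.le_sup (f := id) hi)
  have hs₂ : ∀ i ∈ s₂.image (· + N), ¬ i < N := by
    intro i hi
    obtain ⟨j, _, rfl⟩ := Finset.mem_image.mp hi
    omega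
  have hdisj : Disjoint s₁ (s₂.image (· + N)) := by
    rw [Finset.disjoint_left]
    intro i hi1 hi2
    exact hs₂ i hi2 (hs₁ i hi1)
  refine ⟨s₁ ∪ s₂.image (· + N),
    fun i => if i < N then c₁ i else c₂ (i - N),
    fun i => if i < N then σ₁ i else σ₂ (i - N),
    fun i => if i < N then n₁ i else n₂ (i - N), ?_, ?_⟩
  · intro i hi
    rcases Finset.mem_union.mp hi with hi | hi
    · simp only [if_pos (hs₁ i hi)]
      exact h₁ i hi
    · obtain ⟨j, hj, rfl⟩ := Finset.mem_image.mp hi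
      simp only [if_neg (hs₂ _ hi), Nat.add_sub_cancel]
      exact h₂ j hj
  · intro x hx
    show f x + g x = _
    rw [e₁ x hx, e₂ x hx, Finset.sum_union hdisj]
    congr 1
    · exact Finset.sum_congr rfl fun i hi => by
        simp only [if_pos (hs₁ i hi)]
    · rw [Finset.sum_image (fun a _ b _ h => by omega)]
      refine Finset.sum_congr rfl fun i hi => ?_
      have h : ¬ i + N < N := by omega
      simp only [if_neg h, Nat.add_sub_cancel]

theorem IsGood.finsum {r : ℕ} {Φ : Multiset V} {ι : Type*} (d : ι → ℝ)
    (g : ι → Module.Dual ℝ V → ℝ) :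
    ∀ (s : Finset ι), (∀ i ∈ s, IsGood r Φ (g i)) →
      IsGood r Φ (fun x => ∑ i ∈ s, d i * g i x) := by
  intro s
  induction s using Finset.cons_induction with
  | empty => intro _; simpa using IsGood.zero r Φ
  | cons a s ha ih =>
    intro h
    simp only [Finset.sum_cons]
    exact ((h a (Finset.mem_cons_self a s)).smul (d a)).add
      (ih fun i hi => h i (Finset.mem_cons_of_mem hi))

theorem key_lemma [FiniteDimensional ℝ V] (r : ℕ) (hdim : Module.finrank ℝ V = r)
    (Φ : Multiset V) (w : V → ℕ)
    (hw : ∀ a ∈ Φ, ∀ b ∈ Φ, w a = w b → a = b) :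
    ∀ N : ℕ, ∀ L : Multiset V, (L.map w).sum = N →
      (∀ α ∈ L, α ∈ Φ) → Submodule.span ℝ {v : V | v ∈ L} = ⊤ →
      IsGood r Φ (fun x => ((L.map (fun α => x α)).prod)⁻¹) := by
  intro N
  induction N using Nat.strong_induction_on with
  | _ N ih =>
  intro L hμ hLΦ hLspan
  classical
  have hLset : (↑L.toFinset : Set V) = {v : V | v ∈ L} := by
    ext v; simp [Multiset.mem_toFinset]
  by_cases hli : LinearIndependent ℝ (fun v : {x // x ∈ L.toFinset} => (v : V))
  · -- base case: the support of L is linearly independent, hence a basis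
    have hspan : ⊤ ≤ Submodule.span ℝ (Set.range (fun v : {x // x ∈ L.toFinset} => (v : V))) := by
      rw [Subtype.range_coe_subtype]
      have h : {x : V | x ∈ L.toFinset} = {v : V | v ∈ L} := by ext v; simp
      rw [h, hLspan]
    let B : Basis {x // x ∈ L.toFinset} ℝ V := Basis.mk hli hspan
    have hcard : Fintype.card {x // x ∈ L.toFinset} = r := by
      rw [← finrank_eq_card_basis B, hdim]
    let e : Fin r ≃ {x // x ∈ L.toFinset} := (Fintype.equivFinOfCardEq hcard).symm
    refine ⟨{0}, fun _ => 1, fun _ j => ((e j : V)), fun _ j => L.count (e j : V), ?_, ?_⟩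
    · intro i _
      refine ⟨fun j => hLΦ _ (Multiset.mem_toFinset.mp (e j).2), ?_, fun j => ?_⟩
      · exact hli.comp e e.injective
      · exact Multiset.count_pos.mpr (Multiset.mem_toFinset.mp (e j).2)
    · intro x hx
      simp only [Finset.sum_singleton, one_mul]
      congr 1
      rw [Finset.prod_multiset_map_count,
        ← Finset.prod_coe_sort L.toFinset (fun m => x m ^ L.count m)]
      exact (Equiv.prod_comp e
        (fun m : {x // x ∈ L.toFinset} => x (m : V) ^ L.count (m : V))).symm
  · -- inductive step: a nontrivial dependence relation exists
    obtain ⟨g, hg0, i₁, hi₁⟩ := Fintype.not_linearIndependent_iff.mp hli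
    set T : Finset {x // x ∈ L.toFinset} := Finset.univ.filter (fun i => g i ≠ 0) with hT
    have hi₁T : i₁ ∈ T := Finset.mem_filter.mpr ⟨Finset.mem_univ _, hi₁⟩
    obtain ⟨i₀, hi₀T, hmin⟩ := T.exists_min_image (fun i => w (i : V)) ⟨i₁, hi₁T⟩
    have hgT : ∀ i ∈ T, g i ≠ 0 := fun i hi => (Finset.mem_filter.mp hi).2
    have hg₀ : g i₀ ≠ 0 := hgT i₀ hi₀T
    have hmemL : ∀ i : {x // x ∈ L.toFinset}, (i : V) ∈ L :=
      fun i => Multiset.mem_toFinset.mp i.2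
    have hmemΦ : ∀ i : {x // x ∈ L.toFinset}, (i : V) ∈ Φ := fun i => hLΦ _ (hmemL i)
    -- the new multisets
    set L' : {x // x ∈ L.toFinset} → Multiset V :=
      fun i => (i₀ : V) ::ₘ L.erase (i : V) with hL'
    -- each L' i (for i ∈ T.erase i₀) is good by induction
    have hgood : ∀ i ∈ T.erase i₀,
        IsGood r Φ (fun x => (((L' i).map (fun α => x α)).prod)⁻¹) := by
      intro i hi
      have hine : i ≠ i₀ := Finset.ne_of_mem_erase hi
      have hiT : i ∈ T := Finset.mem_of_mem_erase hi
      have hvne : (i : V) ≠ (i₀ : V) := fun h => hine (Subtype.ext h)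
      have hwlt : w (i₀ : V) < w (i : V) := by
        rcases lt_or_eq_of_le (hmin i hiT) with h | h
        · exact h
        · exact absurd (hw _ (hmemΦ i₀) _ (hmemΦ i) h) (Ne.symm hvne)
      -- measure decreases
      have herase : (i : V) ::ₘ L.erase (i : V) = L := Multiset.cons_erase (hmemL i)
      have hμe : w (i : V) + ((L.erase (i : V)).map w).sum = N := by
        have h4 := congrArg (fun M : Multiset V => (Multiset.map w M).sum) herase
        simp only [Multiset.map_cons, Multiset.sum_cons] at h4
        rw [hμ] at h4
        exact h4
      have hμ' : ((L' i).map w).sum < N := by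
        have : ((L' i).map w).sum = w (i₀ : V) + ((L.erase (i : V)).map w).sum := by
          simp [hL', Multiset.map_cons]
        omega
      -- membership in Φ
      have hmem' : ∀ α ∈ L' i, α ∈ Φ := by
        intro α hα
        rcases Multiset.mem_cons.mp hα with rfl | hα
        · exact hmemΦ i₀
        · exact hLΦ _ (Multiset.mem_of_mem_erase hα)
      -- span is still everything
      have hspan' : Submodule.span ℝ {v : V | v ∈ L' i} = ⊤ := by
        have hsub : {v : V | v ∈ L} ⊆ ↑(Submodule.span ℝ {v : V | v ∈ L' i}) := by
          intro v hv
          by_cases hvi : v = (i : V)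
          · subst hvi
            -- express i via the dependence relation
            have hgi : g i ≠ 0 := hgT i hiT
            have h3 : g i • (i : V) + ∑ j ∈ Finset.univ.erase i, g j • (j : V) = 0 :=
              (Finset.add_sum_erase Finset.univ (fun j => g j • (j : V))
                (Finset.mem_univ i)).trans hg0
            have hrel : g i • (i : V)
                = -∑ j ∈ Finset.univ.erase i, g j • (j : V) := by
              linear_combination (norm := module) h3
            have hmem1 : (∑ j ∈ Finset.univ.erase i, g j • (j : V))
                ∈ Submodule.span ℝ {v : V | v ∈ L' i} := by
              refine Submodule.sum_mem _ ?_
              intro j hj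
              refine Submodule.smul_mem _ _ (Submodule.subset_span ?_)
              have hjne : (j : V) ≠ (i : V) := fun h =>
                (Finset.ne_of_mem_erase hj) (Subtype.ext h)
              show (j : V) ∈ L' i
              exact Multiset.mem_cons_of_mem
                ((Multiset.mem_erase_of_ne hjne).mpr (hmemL j))
            have hmem2 : g i • (i : V) ∈ Submodule.span ℝ {v : V | v ∈ L' i} := by
              rw [hrel]; exact Submodule.neg_mem _ hmem1
            have hmem3 := Submodule.smul_mem
              (Submodule.span ℝ {v : V | v ∈ L' i}) (g i)⁻¹ hmem2
            rwa [smul_smul, inv_mul_cancel₀ hgi, one_smul] at hmem3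
          · refine Submodule.subset_span ?_
            show v ∈ L' i
            exact Multiset.mem_cons_of_mem ((Multiset.mem_erase_of_ne hvi).mpr hv)
        have := Submodule.span_le.mpr hsub
        rw [hLspan] at this
        exact top_le_iff.mp this
      exact ih _ hμ' (L' i) rfl hmem' hspan'
    -- now express the original function as a linear combination
    refine IsGood.congr (IsGood.finsum (fun i => -(g i) / g i₀)
      (fun i x => (((L' i).map (fun α => x α)).prod)⁻¹) (T.erase i₀) hgood) ?_
    intro x hx
    have hxL : ∀ α ∈ L, x α ≠ 0 := fun α hα => hx α (hLΦ α hα)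
    have hxi₀ : x (i₀ : V) ≠ 0 := hxL _ (hmemL i₀)
    -- the dependence relation evaluated at x
    have hrelx : ∑ i : {x // x ∈ L.toFinset}, g i * x (i : V) = 0 := by
      have := congrArg x hg0
      rw [map_sum, map_zero] at this
      simpa [smul_eq_mul] using this
    have hrelT : ∑ i ∈ T, g i * x (i : V) = 0 := by
      rw [hT, Finset.sum_filter_of_ne (fun i _ h => by
        intro hg; rw [hg] at h; simp at h)]
      exact hrelx
    have hsplit : ∑ i ∈ T.erase i₀, g i * x (i : V) = -(g i₀ * x (i₀ : V)) := by
      have h2 : g i₀ * x (i₀ : V) + ∑ i ∈ T.erase i₀, g i * x (i : V) = 0 :=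
        (Finset.add_sum_erase T (fun i => g i * x (i : V)) hi₀T).trans hrelT
      linarith
    have hPne : (Multiset.map (fun α => x α) L).prod ≠ 0 := by
      refine Multiset.prod_ne_zero ?_
      intro h
      obtain ⟨α, hα, h0⟩ := Multiset.mem_map.mp h
      exact hxL α hα h0
    show (Multiset.map (fun α => x α) L).prod⁻¹
      = ∑ i ∈ T.erase i₀,
          (-(g i) / g i₀) * (Multiset.map (fun α => x α) (L' i)).prod⁻¹
    -- rewrite each term
    have hterm : ∀ i ∈ T.erase i₀,
        (-(g i) / g i₀) * (Multiset.map (fun α => x α) (L' i)).prod⁻¹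
          = (g i * x (i : V))
              * (-(g i₀ * x (i₀ : V) * (Multiset.map (fun α => x α) L).prod))⁻¹ := by
      intro i hi
      have hiT : i ∈ T := Finset.mem_of_mem_erase hi
      have hxi : x (i : V) ≠ 0 := hxL _ (hmemL i)
      have hQ : x (i : V) * (Multiset.map (fun α => x α) (L.erase (i : V))).prod
          = (Multiset.map (fun α => x α) L).prod := by
        conv_rhs => rw [← Multiset.cons_erase (hmemL i)]
        simp
      have hQne : (Multiset.map (fun α => x α) (L.erase (i : V))).prod ≠ 0 := by
        intro h; rw [h, mul_zero] at hQ; exact hPne hQ.symm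
      have hprod : (Multiset.map (fun α => x α) (L' i)).prod
          = x (i₀ : V) * (Multiset.map (fun α => x α) (L.erase (i : V))).prod := by
        simp [hL', Multiset.map_cons]
      rw [hprod, ← hQ]
      field_simp
    rw [Finset.sum_congr rfl hterm, ← Finset.sum_mul, hsplit]
    field_simp

end Aux

/-- Let `Φ` be a finite multiset of nonzero vectors spanning an
`r`-dimensional vector space `V`. Every function `θ(L)(x) = 1/∏_{α∈L} ⟨α,x⟩`, where `L`
is a finite multiset of elements of `Φ` spanning `V`, is (on the set of regular points)
a linear combination of functions `1/(α_{i₁}^{n₁} ⋯ α_{i_r}^{n_r})` with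
`{α_{i₁},…,α_{i_r}}` a linearly independent subset of `Φ` of size `r` and the `n_j`
positive integers. -/
theorem theta_L_decomposition
    (r : ℕ) (V : Type*) [AddCommGroup V] [Module ℝ V] [FiniteDimensional ℝ V]
    (hdim : Module.finrank ℝ V = r)
    (Φ : Multiset V) (hΦ0 : ∀ v ∈ Φ, v ≠ (0 : V))
    (hΦspan : Submodule.span ℝ {v : V | v ∈ Φ} = ⊤)
    (L : Multiset V) (hLΦ : ∀ α ∈ L, α ∈ Φ)
    (hLspan : Submodule.span ℝ {v : V | v ∈ L} = ⊤) :
    ∃ (s : Finset ℕ) (c : ℕ → ℝ) (σ : ℕ → Fin r → V) (n : ℕ → Fin r → ℕ),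
      (∀ i ∈ s, (∀ j : Fin r, σ i j ∈ Φ) ∧ LinearIndependent ℝ (σ i) ∧
        ∀ j : Fin r, 1 ≤ n i j) ∧
      ∀ x : Module.Dual ℝ V, (∀ φ ∈ Φ, x φ ≠ 0) →
        ((L.map (fun α => x α)).prod)⁻¹
          = ∑ i ∈ s, c i * (∏ j : Fin r, x (σ i j) ^ n i j)⁻¹ := by
  classical
  -- a weight function injective on the support of Φ
  set w : V → ℕ := fun v =>
    if h : v ∈ Φ.toFinset then (Fintype.equivFin {x // x ∈ Φ.toFinset} ⟨v, h⟩ : ℕ) else 0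
    with hwdef
  have hw : ∀ a ∈ Φ, ∀ b ∈ Φ, w a = w b → a = b := by
    intro a ha b hb hab
    have ha' : a ∈ Φ.toFinset := Multiset.mem_toFinset.mpr ha
    have hb' : b ∈ Φ.toFinset := Multiset.mem_toFinset.mpr hb
    rw [hwdef] at hab
    simp only [dif_pos ha', dif_pos hb'] at hab
    have := (Fintype.equivFin {x // x ∈ Φ.toFinset}).injective (Fin.val_injective hab)
    exact congrArg Subtype.val this
  obtain ⟨s, c, σ, n, h1, h2⟩ :=
    key_lemma r hdim Φ w hw ((L.map w).sum) L rfl hLΦ hLspan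
  exact ⟨s, c, σ, n, h1, h2⟩
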